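/- Let p > 3 be a prime and let G = Φ₄₀(1⁶) be the group of order p⁶ with presentation on generators α₁, α₂, β, β₁, β₂, γ and relations [α₁,α₂] = β, [β,α₁] = β₁, [β,α₂] = β₂, [β₁,α₂] = γ, [β₂,α₁] = γ, α₁ᵖ = α₂ᵖ = βᵖ = β₁ᵖ = β₂ᵖ = γᵖ = 1, with every commutator of a pair of generators not listed among these relations declared trivial. Then the Bogomolov multiplier B₀(G) is trivial. -/

import Mathlib

/-!
Φ₄₀(1⁶): relations [α₁,α₂]=β, [β,α₁]=β₁, [β,α₂]=β₂, [β₁,α₂]=γ, [β₂,α₁]=γ,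
all pth powers trivial.
-/

namespace Stmt13

/-- The additive group `ℚ/ℤ`. -/
abbrev QZ : Type := ℚ ⧸ AddSubgroup.zmultiples (1 : ℚ)

/-- An inhomogeneous 2-cocycle on `G` with values in `ℚ/ℤ` (trivial `G`-action). -/
def IsTwoCocycle {G : Type} [Group G] (f : G → G → QZ) : Prop :=
  ∀ g h j : G, f h j - f (g * h) j + f g (h * j) - f g h = 0

/-- An inhomogeneous 2-coboundary on `G` with values in `ℚ/ℤ` (trivial `G`-action). -/
def IsTwoCoboundary {G : Type} [Group G] (f : G → G → QZ) : Prop :=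
  ∃ c : G → QZ, ∀ g h : G, f g h = c h - c (g * h) + c g

/-- A subgroup is bicyclic if it is abelian and generated by at most two elements
(equivalently, cyclic or a direct product of two cyclic groups). -/
def IsBicyclic {G : Type} [Group G] (A : Subgroup G) : Prop :=
  (∀ x y : A, x * y = y * x) ∧ ∃ a b : G, A = Subgroup.closure {a, b}

/-- The Bogomolov multiplier `B₀(G) ⊆ H²(G, ℚ/ℤ)` is trivial, phrased at the level of
2-cocycles: every 2-cocycle whose restriction to each bicyclic subgroup is a coboundary
(i.e. whose class restricts to zero on each bicyclic subgroup) is itself a coboundary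
(i.e. its class is zero). -/
def BogomolovMultiplierIsTrivial (G : Type) [Group G] : Prop :=
  ∀ f : G → G → QZ, IsTwoCocycle f →
    (∀ A : Subgroup G, IsBicyclic A → IsTwoCoboundary (fun a b : ↥A => f ↑a ↑b)) →
    IsTwoCoboundary f

/-- The Bogomolov multiplier `B₀(G) ⊆ H²(G, ℚ/ℤ)` is nontrivial, phrased at the level of
2-cocycles. -/
def BogomolovMultiplierIsNontrivial (G : Type) [Group G] : Prop :=
  ∃ f : G → G → QZ, IsTwoCocycle f ∧
    (∀ A : Subgroup G, IsBicyclic A → IsTwoCoboundary (fun a b : ↥A => f ↑a ↑b)) ∧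
    ¬ IsTwoCoboundary f

/-- The generators. -/
inductive Gen | a1 | a2 | b | b1 | b2 | g

open FreeGroup

/-- The commutator `[x,y] = x⁻¹y⁻¹xy`. -/
def c (x y : FreeGroup Gen) : FreeGroup Gen := x⁻¹ * y⁻¹ * x * y

/-- The defining relators. -/
def rels (p : ℕ) : Set (FreeGroup Gen) :=
  { c (of .a1) (of .a2) * (of Gen.b)⁻¹,
    c (of .b) (of .a1) * (of Gen.b1)⁻¹,
    c (of .b) (of .a2) * (of Gen.b2)⁻¹,
    c (of .b1) (of .a2) * (of Gen.g)⁻¹,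
    c (of .b2) (of .a1) * (of Gen.g)⁻¹,
    c (of .a1) (of .b1),
    c (of .a1) (of .g),
    c (of .a2) (of .b2),
    c (of .a2) (of .g),
    c (of .b) (of .b1),
    c (of .b) (of .b2),
    c (of .b) (of .g),
    c (of .b1) (of .b2),
    c (of .b1) (of .g),
    c (of .b2) (of .g),
    (of Gen.a1) ^ p,
    (of Gen.a2) ^ p,
    (of Gen.b) ^ p,
    (of Gen.b1) ^ p,
    (of Gen.b2) ^ p,
    (of Gen.g) ^ p }

section GroupCalc
variable {H : Type*} [Group H]



def Kc (x y : H) : H := x⁻¹ * y⁻¹ * x * y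

lemma Kc_one_right (x : H) : Kc x 1 = 1 := by simp [Kc]

lemma Kc_self (x : H) : Kc x x = 1 := by simp [Kc]

lemma Kc_mul_right (x y z : H) : Kc x (y * z) = Kc x z * ((z⁻¹ * Kc x y) * z) := by
  simp only [Kc]; group

lemma conj_eq_mul_Kc (x y : H) : y⁻¹ * x * y = x * Kc x y := by
  simp only [Kc]; group

lemma mul_eq_mul_mul_Kc (x y : H) : x * y = y * x * Kc x y := by
  simp only [Kc]; group

lemma commute_Kc_eq_one {x y : H} (h : Commute x y) : Kc x y = 1 := by
  simp only [Kc, mul_assoc]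
  rw [h.eq]
  group

lemma conj_eq_of_commute {w z : H} (h : Commute w z) : z⁻¹ * w * z = w := by
  rw [conj_eq_mul_Kc, commute_Kc_eq_one h, mul_one]

lemma commute_of_Kc_eq_one {x y : H} (h : Kc x y = 1) : Commute x y := by
  have hx : x * y = y * x * Kc x y := mul_eq_mul_mul_Kc x y
  rw [h, mul_one] at hx
  exact hx

lemma Kc_pow_right {x y : H} (h : Commute (Kc x y) y) (n : ℕ) :
    Kc x (y ^ n) = (Kc x y) ^ n := by
  induction n with
  | zero => simp [Kc]
  | succ n ih =>
    rw [pow_succ' y n, Kc_mul_right, ih, conj_eq_of_commute (h.pow_right n), ← pow_succ]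

lemma conj_pow_aux {B y : H} (h2 : Commute (Kc B y) y) (n : ℕ) :
    (y ^ n)⁻¹ * B * (y ^ n) = B * (Kc B y) ^ n := by
  induction n with
  | zero => simp
  | succ n ih =>
    rw [pow_succ y n]
    have e : (y ^ n * y)⁻¹ * B * (y ^ n * y) = y⁻¹ * ((y ^ n)⁻¹ * B * y ^ n) * y := by group
    rw [e, ih, show y⁻¹ * (B * (Kc B y) ^ n) * y = (y⁻¹ * B * y) * (y⁻¹ * (Kc B y) ^ n * y) by group,
      conj_eq_of_commute ((h2.pow_left n)), conj_eq_mul_Kc, mul_assoc, ← pow_succ']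

lemma Kc_pow_right' {x y : H} (h2 : Commute (Kc (Kc x y) y) y)
    (h1 : Commute (Kc x y) (Kc (Kc x y) y)) (n : ℕ) :
    Kc x (y ^ n) = (Kc x y) ^ n * (Kc (Kc x y) y) ^ (n.choose 2) := by
  set B := Kc x y with hB
  set B2 := Kc B y with hB2
  induction n with
  | zero => simp [Kc]
  | succ n ih =>
    rw [pow_succ' y n, Kc_mul_right, ih, conj_pow_aux h2]
    have hcomm : Commute (B2 ^ (n.choose 2)) B := (h1.symm.pow_left _)
    calc B ^ n * B2 ^ n.choose 2 * (B * B2 ^ n)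
        = B ^ n * (B2 ^ n.choose 2 * B) * B2 ^ n := by group
      _ = B ^ n * (B * B2 ^ n.choose 2) * B2 ^ n := by rw [hcomm.eq]
      _ = B ^ (n + 1) * (B2 ^ n.choose 2 * B2 ^ n) := by rw [pow_succ]; group
      _ = B ^ (n + 1) * B2 ^ ((n + 1).choose 2) := by
          rw [← pow_add]
          have he : n.choose 2 + n = (n + 1).choose 2 := by
            rw [Nat.choose_succ_succ, Nat.choose_one_right]
            exact Nat.add_comm _ _
          rw [he]


end GroupCalc

section Rels
variable {p : ℕ}

/-- abbreviation for the presented group -/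
local notation "P" => PresentedGroup (rels p)

lemma mk_rel {r : FreeGroup Gen} (hr : r ∈ rels p) : PresentedGroup.mk (rels p) r = 1 :=
  (QuotientGroup.eq_one_iff r).mpr (Subgroup.subset_normalClosure hr)

lemma mk_c (u v : FreeGroup Gen) :
    PresentedGroup.mk (rels p) (c u v) =
      Kc (PresentedGroup.mk (rels p) u) (PresentedGroup.mk (rels p) v) := by
  simp [c, Kc]

lemma rel_of_c_mul {u v : FreeGroup Gen} {w : Gen}
    (hr : c u v * (FreeGroup.of w)⁻¹ ∈ rels p) :
    Kc (PresentedGroup.mk (rels p) u) (PresentedGroup.mk (rels p) v) =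
      (PresentedGroup.of w : P) := by
  have h := mk_rel hr
  simp only [_root_.map_mul, _root_.map_inv, mk_c] at h
  exact mul_inv_eq_one.mp h

lemma rel_comm {u v : Gen} (hr : c (of u) (of v) ∈ rels p) :
    Commute (PresentedGroup.of u : P) (PresentedGroup.of v) := by
  apply commute_of_Kc_eq_one
  have h := mk_rel hr
  rw [mk_c] at h
  exact h

lemma rel_pow {u : Gen} (hr : (of u) ^ p ∈ rels p) :
    (PresentedGroup.of u : P) ^ p = 1 := by
  have h := mk_rel hr
  simp only [map_pow] at h
  exact h

lemma grel_b : Kc (PresentedGroup.of Gen.a1 : P) (PresentedGroup.of Gen.a2)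
    = PresentedGroup.of Gen.b := rel_of_c_mul (by simp [rels])

lemma grel_b1 : Kc (PresentedGroup.of Gen.b : P) (PresentedGroup.of Gen.a1)
    = PresentedGroup.of Gen.b1 := rel_of_c_mul (by simp [rels])

lemma grel_b2 : Kc (PresentedGroup.of Gen.b : P) (PresentedGroup.of Gen.a2)
    = PresentedGroup.of Gen.b2 := rel_of_c_mul (by simp [rels])

lemma grel_g1 : Kc (PresentedGroup.of Gen.b1 : P) (PresentedGroup.of Gen.a2)
    = PresentedGroup.of Gen.g := rel_of_c_mul (by simp [rels])

lemma grel_g2 : Kc (PresentedGroup.of Gen.b2 : P) (PresentedGroup.of Gen.a1)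
    = PresentedGroup.of Gen.g := rel_of_c_mul (by simp [rels])

lemma gcomm_a1_b1 : Commute (PresentedGroup.of Gen.a1 : P) (PresentedGroup.of Gen.b1) :=
  rel_comm (by simp [rels])
lemma gcomm_a1_g : Commute (PresentedGroup.of Gen.a1 : P) (PresentedGroup.of Gen.g) :=
  rel_comm (by simp [rels])
lemma gcomm_a2_b2 : Commute (PresentedGroup.of Gen.a2 : P) (PresentedGroup.of Gen.b2) :=
  rel_comm (by simp [rels])
lemma gcomm_a2_g : Commute (PresentedGroup.of Gen.a2 : P) (PresentedGroup.of Gen.g) :=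
  rel_comm (by simp [rels])
lemma gcomm_b_b1 : Commute (PresentedGroup.of Gen.b : P) (PresentedGroup.of Gen.b1) :=
  rel_comm (by simp [rels])
lemma gcomm_b_b2 : Commute (PresentedGroup.of Gen.b : P) (PresentedGroup.of Gen.b2) :=
  rel_comm (by simp [rels])
lemma gcomm_b_g : Commute (PresentedGroup.of Gen.b : P) (PresentedGroup.of Gen.g) :=
  rel_comm (by simp [rels])
lemma gcomm_b1_b2 : Commute (PresentedGroup.of Gen.b1 : P) (PresentedGroup.of Gen.b2) :=
  rel_comm (by simp [rels])
lemma gcomm_b1_g : Commute (PresentedGroup.of Gen.b1 : P) (PresentedGroup.of Gen.g) :=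
  rel_comm (by simp [rels])
lemma gcomm_b2_g : Commute (PresentedGroup.of Gen.b2 : P) (PresentedGroup.of Gen.g) :=
  rel_comm (by simp [rels])

lemma gpow_a1 : (PresentedGroup.of Gen.a1 : P) ^ p = 1 := rel_pow (by simp [rels])
lemma gpow_a2 : (PresentedGroup.of Gen.a2 : P) ^ p = 1 := rel_pow (by simp [rels])

end Rels

theorem splitting (p : ℕ) (hp : p.Prime) (h3 : 3 < p)
    {E : Type*} [Group E] (π : E →* PresentedGroup (rels p))
    (cp : ∀ X Y : E, Commute (π X) (π Y) → Commute X Y)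
    (hdiv : ∀ X : E, π X = 1 → ∃ Y : E, π Y = 1 ∧ Y ^ p = X⁻¹)
    (a1 a2 : E) (ha1 : π a1 = PresentedGroup.of Gen.a1)
    (ha2 : π a2 = PresentedGroup.of Gen.a2) :
    ∃ s : PresentedGroup (rels p) →* E, π.comp s = MonoidHom.id _ := by
  have central : ∀ {Y : E}, π Y = 1 → ∀ W : E, Commute Y W := by
    intro Y hY W
    exact cp Y W (by rw [hY]; exact Commute.one_left _)
  -- adjust a1 and a2 so that their p-th powers vanish
  obtain ⟨z1, hz1, hz1p⟩ := hdiv (a1 ^ p) (by rw [map_pow, ha1, gpow_a1])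
  obtain ⟨z2, hz2, hz2p⟩ := hdiv (a2 ^ p) (by rw [map_pow, ha2, gpow_a2])
  set A1 : E := a1 * z1 with hA1def
  set A2 : E := a2 * z2 with hA2def
  have hπA1 : π A1 = PresentedGroup.of Gen.a1 := by
    rw [hA1def, _root_.map_mul, hz1, mul_one, ha1]
  have hπA2 : π A2 = PresentedGroup.of Gen.a2 := by
    rw [hA2def, _root_.map_mul, hz2, mul_one, ha2]
  have hA1p : A1 ^ p = 1 := by
    rw [hA1def, ((central hz1 a1).symm).mul_pow, hz1p, mul_inv_cancel]
  have hA2p : A2 ^ p = 1 := by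
    rw [hA2def, ((central hz2 a2).symm).mul_pow, hz2p, mul_inv_cancel]
  -- the remaining generators
  set B : E := Kc A1 A2 with hBdef
  set B1 : E := Kc B A1 with hB1def
  set B2 : E := Kc B A2 with hB2def
  set C : E := Kc B1 A2 with hCdef
  set C' : E := Kc B2 A1 with hC'def
  have map_Kc : ∀ X Y : E, π (Kc X Y) = Kc (π X) (π Y) := by
    intro X Y; simp only [Kc, _root_.map_mul, _root_.map_inv]
  have hπB : π B = PresentedGroup.of Gen.b := by
    rw [hBdef, map_Kc, hπA1, hπA2, grel_b]
  have hπB1 : π B1 = PresentedGroup.of Gen.b1 := by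
    rw [hB1def, map_Kc, hπB, hπA1, grel_b1]
  have hπB2 : π B2 = PresentedGroup.of Gen.b2 := by
    rw [hB2def, map_Kc, hπB, hπA2, grel_b2]
  have hπC : π C = PresentedGroup.of Gen.g := by
    rw [hCdef, map_Kc, hπB1, hπA2, grel_g1]
  have hπC' : π C' = PresentedGroup.of Gen.g := by
    rw [hC'def, map_Kc, hπB2, hπA1, grel_g2]
  -- commutation facts in E coming from commutation in the presented group
  have hA1B1 : Commute A1 B1 := cp _ _ (by rw [hπA1, hπB1]; exact gcomm_a1_b1)
  have hA1C : Commute A1 C := cp _ _ (by rw [hπA1, hπC]; exact gcomm_a1_g)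
  have hA2B2 : Commute A2 B2 := cp _ _ (by rw [hπA2, hπB2]; exact gcomm_a2_b2)
  have hA2C : Commute A2 C := cp _ _ (by rw [hπA2, hπC]; exact gcomm_a2_g)
  have hBB1 : Commute B B1 := cp _ _ (by rw [hπB, hπB1]; exact gcomm_b_b1)
  have hBB2 : Commute B B2 := cp _ _ (by rw [hπB, hπB2]; exact gcomm_b_b2)
  have hBC : Commute B C := cp _ _ (by rw [hπB, hπC]; exact gcomm_b_g)
  have hB1B2 : Commute B1 B2 := cp _ _ (by rw [hπB1, hπB2]; exact gcomm_b1_b2)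
  have hB1C : Commute B1 C := cp _ _ (by rw [hπB1, hπC]; exact gcomm_b1_g)
  have hB2C : Commute B2 C := cp _ _ (by rw [hπB2, hπC]; exact gcomm_b2_g)
  have hBC' : Commute B C' := cp _ _ (by rw [hπB, hπC']; exact gcomm_b_g)
  -- the Jacobi-type identity : C' = C
  have hJac : C' = C := by
    have key1 : Kc B (A1 * A2) = B2 * (B1 * C) := by
      rw [Kc_mul_right, ← hB1def, ← hB2def, conj_eq_mul_Kc, ← hCdef]
    have key2 : Kc B (A2 * A1) = B1 * (B2 * C') := by
      rw [Kc_mul_right, ← hB1def, ← hB2def, conj_eq_mul_Kc, ← hC'def]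
    have key3 : Kc B (A2 * A1 * B) = B1 * (B2 * C') := by
      rw [Kc_mul_right, key2, Kc_self, one_mul,
        conj_eq_of_commute (hBB1.mul_right (hBB2.mul_right hBC')).symm]
    have hsplit : A1 * A2 = A2 * A1 * B := by rw [hBdef]; exact mul_eq_mul_mul_Kc A1 A2
    have heq : B2 * (B1 * C) = B1 * (B2 * C') := by rw [← key1, hsplit, key3]
    have heq2 : B2 * (B1 * C) = B2 * (B1 * C') := by
      rw [heq, ← mul_assoc, hB1B2.eq, mul_assoc]
    exact (mul_left_cancel (mul_left_cancel heq2)).symm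
  -- power relations in E
  have hB1p : B1 ^ p = 1 := by
    have := Kc_pow_right (x := B) (y := A1) (by rw [← hB1def]; exact hA1B1.symm) p
    rw [hA1p, Kc_one_right, ← hB1def] at this
    exact this.symm
  have hB2p : B2 ^ p = 1 := by
    have := Kc_pow_right (x := B) (y := A2) (by rw [← hB2def]; exact hA2B2.symm) p
    rw [hA2p, Kc_one_right, ← hB2def] at this
    exact this.symm
  have hCp : C ^ p = 1 := by
    have := Kc_pow_right (x := B1) (y := A2) (by rw [← hCdef]; exact hA2C.symm) p
    rw [hA2p, Kc_one_right, ← hCdef] at this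
    exact this.symm
  have hBp : B ^ p = 1 := by
    have h2 : Commute (Kc (Kc A1 A2) A2) A2 := by
      rw [← hBdef, ← hB2def]; exact hA2B2.symm
    have h1 : Commute (Kc A1 A2) (Kc (Kc A1 A2) A2) := by
      rw [← hBdef, ← hB2def]; exact hBB2
    have := Kc_pow_right' h2 h1 p
    rw [hA2p, Kc_one_right, ← hBdef, ← hB2def] at this
    have hdvd : p ∣ p.choose 2 := hp.dvd_choose_self (by norm_num) (by omega)
    obtain ⟨m, hm⟩ := hdvd
    rw [hm, pow_mul, hB2p, one_pow, mul_one] at this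
    exact this.symm
  -- the splitting homomorphism
  let φ : Gen → E := fun x => match x with
    | .a1 => A1 | .a2 => A2 | .b => B | .b1 => B1 | .b2 => B2 | .g => C
  have hφ : ∀ r ∈ rels p, FreeGroup.lift φ r = 1 := by
    have hlift : ∀ u v : Gen, FreeGroup.lift φ (c (of u) (of v)) = Kc (φ u) (φ v) := by
      intro u v; simp only [c, Kc, _root_.map_mul, _root_.map_inv, FreeGroup.lift_apply_of]
    have hliftrel : ∀ (u v w : Gen), Kc (φ u) (φ v) = φ w →
        FreeGroup.lift φ (c (of u) (of v) * (of w)⁻¹) = 1 := by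
      intro u v w h
      rw [_root_.map_mul, _root_.map_inv, hlift, h, FreeGroup.lift_apply_of, mul_inv_cancel]
    have hliftcomm : ∀ (u v : Gen), Commute (φ u) (φ v) →
        FreeGroup.lift φ (c (of u) (of v)) = 1 := by
      intro u v h; rw [hlift]; exact commute_Kc_eq_one h
    have hliftpow : ∀ (u : Gen), (φ u) ^ p = 1 → FreeGroup.lift φ ((of u) ^ p) = 1 := by
      intro u h; rw [_root_.map_pow, FreeGroup.lift_apply_of, h]
    intro r hr
    simp only [rels, Set.mem_insert_iff, Set.mem_singleton_iff] at hr
    obtain rfl|rfl|rfl|rfl|rfl|rfl|rfl|rfl|rfl|rfl|rfl|rfl|rfl|rfl|rfl|rfl|rfl|rfl|rfl|rfl|rfl := hr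
    · exact hliftrel _ _ _ hBdef.symm
    · exact hliftrel _ _ _ hB1def.symm
    · exact hliftrel _ _ _ hB2def.symm
    · exact hliftrel _ _ _ hCdef.symm
    · exact hliftrel _ _ _ (hC'def.symm.trans hJac)
    · exact hliftcomm _ _ hA1B1
    · exact hliftcomm _ _ hA1C
    · exact hliftcomm _ _ hA2B2
    · exact hliftcomm _ _ hA2C
    · exact hliftcomm _ _ hBB1
    · exact hliftcomm _ _ hBB2
    · exact hliftcomm _ _ hBC
    · exact hliftcomm _ _ hB1B2
    · exact hliftcomm _ _ hB1C
    · exact hliftcomm _ _ hB2C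
    · exact hliftpow _ hA1p
    · exact hliftpow _ hA2p
    · exact hliftpow _ hBp
    · exact hliftpow _ hB1p
    · exact hliftpow _ hB2p
    · exact hliftpow _ hCp
  refine ⟨PresentedGroup.toGroup hφ, ?_⟩
  apply PresentedGroup.ext
  intro x
  rw [MonoidHom.comp_apply, PresentedGroup.toGroup.of, MonoidHom.id_apply]
  cases x with
  | a1 => exact hπA1
  | a2 => exact hπA2
  | b => exact hπB
  | b1 => exact hπB1
  | b2 => exact hπB2
  | g => exact hπC

lemma QZ_div (x : QZ) {n : ℕ} (hn : n ≠ 0) : ∃ y : QZ, n • y = x := by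
  obtain ⟨q, rfl⟩ := QuotientAddGroup.mk_surjective x
  refine ⟨QuotientAddGroup.mk (q / n), ?_⟩
  have hmap := map_nsmul (QuotientAddGroup.mk' (AddSubgroup.zmultiples (1 : ℚ))) n (q / n)
  have h2 : ((n • (q / n) : ℚ) : QZ) = n • (QuotientAddGroup.mk (q / n) : QZ) := hmap
  rw [← h2]
  congr 1
  rw [nsmul_eq_mul, mul_div_cancel₀]
  exact Nat.cast_ne_zero.mpr hn

/-- The central extension of `G` by `ℚ/ℤ` determined by a normalized 2-cocycle. -/
def extGroup {G : Type} [Group G] (f : G → G → QZ) (hf : IsTwoCocycle f)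
    (h10 : ∀ g, f 1 g = 0) (h01 : ∀ g, f g 1 = 0) : Group (G × QZ) where
  mul x y := (x.1 * y.1, x.2 + y.2 + f x.1 y.1)
  one := (1, 0)
  inv x := (x.1⁻¹, -x.2 - f x.1 x.1⁻¹)
  mul_assoc x y z := by
    have h := hf x.1 y.1 z.1
    apply Prod.ext
    · exact mul_assoc _ _ _
    · show (x.2 + y.2 + f x.1 y.1) + z.2 + f (x.1 * y.1) z.1
        = x.2 + (y.2 + z.2 + f y.1 z.1) + f x.1 (y.1 * z.1)
      have h2 : f (x.1 * y.1) z.1 + f x.1 y.1 = f y.1 z.1 + f x.1 (y.1 * z.1) := by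
        have h3 : (f (x.1 * y.1) z.1 + f x.1 y.1) - (f y.1 z.1 + f x.1 (y.1 * z.1))
            = -(f y.1 z.1 - f (x.1 * y.1) z.1 + f x.1 (y.1 * z.1) - f x.1 y.1) := by abel
        rw [h, neg_zero] at h3
        exact sub_eq_zero.mp h3
      calc (x.2 + y.2 + f x.1 y.1) + z.2 + f (x.1 * y.1) z.1
          = x.2 + y.2 + z.2 + (f (x.1 * y.1) z.1 + f x.1 y.1) := by abel
        _ = x.2 + y.2 + z.2 + (f y.1 z.1 + f x.1 (y.1 * z.1)) := by rw [h2]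
        _ = x.2 + (y.2 + z.2 + f y.1 z.1) + f x.1 (y.1 * z.1) := by abel
  one_mul x := by
    apply Prod.ext
    · exact one_mul _
    · show 0 + x.2 + f 1 x.1 = x.2
      rw [h10]; abel
  mul_one x := by
    apply Prod.ext
    · exact mul_one _
    · show x.2 + 0 + f x.1 1 = x.2
      rw [h01]; abel
  inv_mul_cancel x := by
    have h := hf x.1 x.1⁻¹ x.1
    rw [mul_inv_cancel, inv_mul_cancel, h10, h01] at h
    apply Prod.ext
    · exact inv_mul_cancel _
    · show (-x.2 - f x.1 x.1⁻¹) + x.2 + f x.1⁻¹ x.1 = 0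
      have h2 : f x.1⁻¹ x.1 = f x.1 x.1⁻¹ := by
        have h3 : f x.1⁻¹ x.1 - f x.1 x.1⁻¹ = 0 := by rw [← h]; abel
        exact sub_eq_zero.mp h3
      rw [h2]; abel

theorem bogomolov_trivial_Phi40 (p : ℕ) (hp : p.Prime) (h3 : 3 < p)
    (hcard : Nat.card (PresentedGroup (rels p)) = p ^ 6) :
    BogomolovMultiplierIsTrivial (PresentedGroup (rels p)) := by
  intro f hf hbi
  -- f is symmetric on commuting pairs, since its restriction to each
  -- bicyclic subgroup is a coboundary
  have hsym : ∀ x y : PresentedGroup (rels p), x * y = y * x → f x y = f y x := by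
    intro x y hxy
    have hxA : x ∈ Subgroup.closure ({x, y} : Set (PresentedGroup (rels p))) :=
      Subgroup.subset_closure (Set.mem_insert _ _)
    have hyA : y ∈ Subgroup.closure ({x, y} : Set (PresentedGroup (rels p))) :=
      Subgroup.subset_closure (Set.mem_insert_of_mem _ rfl)
    have hab : ∀ u v : (Subgroup.closure ({x, y} : Set (PresentedGroup (rels p)))),
        u * v = v * u := by
      intro u v
      have hc : Commute (u : PresentedGroup (rels p)) (v : PresentedGroup (rels p)) := by
        refine Subgroup.closure_induction₂ ?_ ?_ ?_ ?_ ?_ ?_ ?_ u.2 v.2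
        · intro a b ha hb
          simp only [Set.mem_insert_iff, Set.mem_singleton_iff] at ha hb
          rcases ha with rfl | rfl <;> rcases hb with rfl | rfl
          · exact Commute.refl _
          · exact hxy
          · exact hxy.symm
          · exact Commute.refl _
        · intro a _; exact Commute.one_left _
        · intro a _; exact Commute.one_right _
        · intro a b cc _ _ _ h1 h2; exact h1.mul_left h2
        · intro a b cc _ _ _ h1 h2; exact h1.mul_right h2
        · intro a b _ _ h; exact h.inv_left
        · intro a b _ _ h; exact h.inv_right
      exact Subtype.ext hc
    obtain ⟨cA, hcA⟩ := hbi _ ⟨hab, x, y, rfl⟩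
    have h1 := hcA ⟨x, hxA⟩ ⟨y, hyA⟩
    have h2 := hcA ⟨y, hyA⟩ ⟨x, hxA⟩
    have he : (⟨x, hxA⟩ * ⟨y, hyA⟩ : Subgroup.closure ({x, y} : Set (PresentedGroup (rels p))))
        = ⟨y, hyA⟩ * ⟨x, hxA⟩ := Subtype.ext hxy
    simp only at h1 h2
    rw [h1, h2, he]
    abel
  -- normalize the cocycle
  have hk1 : ∀ j, f 1 j = f 1 1 := by
    intro j
    have h := hf 1 1 j
    simp only [one_mul] at h
    have h2 : f 1 j - f 1 1 = 0 := by rw [← h]; abel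
    exact sub_eq_zero.mp h2
  have hk2 : ∀ g, f g 1 = f 1 1 := by
    intro g
    have h := hf g 1 1
    simp only [mul_one, one_mul] at h
    have h2 : f 1 1 - f g 1 = 0 := by rw [← h]; abel
    exact (sub_eq_zero.mp h2).symm
  set k : QZ := f 1 1 with hkdef
  set f0 : PresentedGroup (rels p) → PresentedGroup (rels p) → QZ :=
    fun g h => f g h - k with hf0def
  have hf0 : IsTwoCocycle f0 := by
    intro g h j
    have h' := hf g h j
    simp only [hf0def]
    calc (f h j - k) - (f (g * h) j - k) + (f g (h * j) - k) - (f g h - k)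
        = f h j - f (g * h) j + f g (h * j) - f g h := by abel
      _ = 0 := h'
  have h10 : ∀ g, f0 1 g = 0 := by
    intro g; simp only [hf0def]; rw [hk1 g]; exact sub_self k
  have h01 : ∀ g, f0 g 1 = 0 := by
    intro g; simp only [hf0def]; rw [hk2 g]; exact sub_self k
  have hsym0 : ∀ x y : PresentedGroup (rels p), x * y = y * x → f0 x y = f0 y x := by
    intro x y h; simp only [hf0def]; rw [hsym x y h]
  -- the central extension determined by f0
  letI : Group (PresentedGroup (rels p) × QZ) := extGroup f0 hf0 h10 h01
  let π : (PresentedGroup (rels p) × QZ) →* PresentedGroup (rels p) :=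
    { toFun := Prod.fst, map_one' := rfl, map_mul' := fun _ _ => rfl }
  have cp : ∀ X Y : PresentedGroup (rels p) × QZ, Commute (π X) (π Y) → Commute X Y := by
    intro X Y h
    have h' : X.1 * Y.1 = Y.1 * X.1 := h
    show X * Y = Y * X
    apply Prod.ext
    · exact h'
    · show X.2 + Y.2 + f0 X.1 Y.1 = Y.2 + X.2 + f0 Y.1 X.1
      rw [hsym0 _ _ h']
      abel
  have pow_snd : ∀ (t : QZ) (n : ℕ),
      (((1 : PresentedGroup (rels p)), t) : PresentedGroup (rels p) × QZ) ^ n = (1, n • t) := by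
    intro t n
    induction n with
    | zero => rw [pow_zero, zero_smul]; rfl
    | succ n ih =>
      rw [pow_succ, ih]
      apply Prod.ext
      · exact one_mul _
      · show n • t + t + f0 1 1 = (n + 1) • t
        rw [h10, succ_nsmul]
        abel
  have hdiv : ∀ X : PresentedGroup (rels p) × QZ, π X = 1 → ∃ Y, π Y = 1 ∧ Y ^ p = X⁻¹ := by
    intro X hX
    have hX1 : X.1 = 1 := hX
    obtain ⟨t, ht⟩ := QZ_div (-X.2 - f0 X.1 X.1⁻¹) hp.ne_zero
    refine ⟨(1, t), rfl, ?_⟩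
    rw [pow_snd, ht]
    apply Prod.ext
    · show (1 : PresentedGroup (rels p)) = X.1⁻¹
      rw [hX1, inv_one]
    · rfl
  obtain ⟨s, hs⟩ := splitting p hp h3 π cp hdiv
    ((PresentedGroup.of Gen.a1 : PresentedGroup (rels p)), (0 : QZ))
    ((PresentedGroup.of Gen.a2 : PresentedGroup (rels p)), (0 : QZ)) rfl rfl
  have hfst : ∀ x : PresentedGroup (rels p), (s x).1 = x := by
    intro x
    exact DFunLike.congr_fun hs x
  set d : PresentedGroup (rels p) → QZ := fun x => (s x).2 with hddef
  have hmul : ∀ g h : PresentedGroup (rels p), d (g * h) = d g + d h + f0 g h := by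
    intro g h
    have h1 : s (g * h) = s g * s h := map_mul s g h
    have h2 : (s (g * h)).2 = (s g).2 + (s h).2 + f0 (s g).1 (s h).1 := congrArg Prod.snd h1
    rw [hfst g, hfst h] at h2
    exact h2
  refine ⟨fun x => -(d x) + k, ?_⟩
  intro g h
  have h3 : f0 g h = d (g * h) - d g - d h := by rw [hmul g h]; abel
  have h4 : f g h = f0 g h + k := by simp only [hf0def]; abel
  rw [h4, h3]
  beta_reduce
  abel

end Stmt13
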